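/- Let f : ℕ → ℕ → ℕ be defined by f(0,h) = 0 for all h, f(n,0) = 1 for all n ≥ 1, and f(n,h) = f(n,h-1) + f(⌊n/2⌋,h) + f(n-1-⌊n/2⌋,h) for all n,h ≥ 1. Then for all natural numbers n ≥ 2 and h ≥ 1, viewing the values as real numbers, f(n,h) ≤ n^(2.45 + log₂(1 + (h-1)/(log₂ n))), where log₂ denotes the real base-2 logarithm and the power is a real power. -/

import Mathlib

private theorem key_bound (f : ℕ → ℕ → ℕ)
    (hf0 : ∀ h, f 0 h = 0)
    (hfn0 : ∀ n, 1 ≤ n → f n 0 = 1)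
    (hrec : ∀ n h, 1 ≤ n → 1 ≤ h →
      f n h = f n (h - 1) + f (n / 2) h + f (n - 1 - n / 2) h) :
    ∀ h n, f n (h+1) ≤ n * (Nat.log 2 n + h).choose (Nat.log 2 n) := by
  intro h
  induction h with
  | zero =>
    intro n
    induction n using Nat.strong_induction_on with
    | _ n ihn =>
      rcases Nat.eq_zero_or_pos n with rfl | hn
      · simp [hf0]
      · rw [hrec n 1 hn le_rfl]
        have h1 := ihn (n/2) (by omega)
        have h2 := ihn (n - 1 - n/2) (by omega)
        rw [hfn0 n hn]
        simp only [Nat.zero_add, Nat.add_zero, Nat.choose_self, mul_one] at h1 h2 ⊢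
        omega
  | succ h ih =>
    intro n
    induction n using Nat.strong_induction_on with
    | _ n ihn =>
      rcases Nat.eq_zero_or_pos n with rfl | hn
      · simp [hf0]
      rcases eq_or_lt_of_le (Nat.succ_le_of_lt hn) with rfl | hn2
      · -- n = 1
        rw [hrec 1 (h+2) le_rfl (by omega)]
        have := ih 1
        simp [hf0, Nat.log_one_right] at this ⊢
        omega
      · -- n ≥ 2
        have hn2 : 2 ≤ n := hn2
        set k := Nat.log 2 n with hk
        clear_value k
        have hk1 : 1 ≤ k := hk ▸ Nat.log_pos (by norm_num) hn2
        obtain ⟨j, hkj⟩ : ∃ j, k = j + 1 := ⟨k - 1, by omega⟩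
        subst hkj
        have hkd : Nat.log 2 (n/2) = j := by
          have := Nat.log_div_base 2 n
          omega
        have hmle : n - 1 - n/2 ≤ n/2 := by omega
        have hkm : Nat.log 2 (n - 1 - n/2) ≤ j := by
          rw [← hkd]; exact Nat.log_mono_right hmle
        rw [hrec n (h+2) hn (by omega)]
        have h1 := ih n
        have h2 := ihn (n/2) (by omega)
        have h3 := ihn (n - 1 - n/2) (by omega)
        rw [← hk] at h1
        rw [hkd] at h2
        have hch : (Nat.log 2 (n-1-n/2) + (h+1)).choose (Nat.log 2 (n-1-n/2))
            ≤ (j + (h+1)).choose j := by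
          rw [Nat.choose_symm_add, Nat.choose_symm_add]
          exact Nat.choose_le_choose _ (by omega)
        have h3' : f (n-1-n/2) (h+2) ≤ (n-1-n/2) * (j+(h+1)).choose j :=
          h3.trans (Nat.mul_le_mul_left _ hch)
        have hpas : ((j+1) + (h+1)).choose (j+1) = ((j+1) + h).choose (j+1) + (j + (h+1)).choose j := by
          rw [show j+1+(h+1) = (j+(h+1))+1 by omega, Nat.choose_succ_succ,
            show j+(h+1) = j+1+h by omega, Nat.add_comm]
        have hsum : n/2 + (n - 1 - n/2) = n - 1 := by omega
        calc f n (h+2-1) + f (n/2) (h+2) + f (n-1-n/2) (h+2)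
            = f n (h+1) + f (n/2) (h+2) + f (n-1-n/2) (h+2) := by norm_num
          _ ≤ n * ((j+1)+h).choose (j+1) + (n/2) * (j+(h+1)).choose j
              + (n-1-n/2) * (j+(h+1)).choose j :=
              Nat.add_le_add (Nat.add_le_add h1 h2) h3'
          _ = n * ((j+1)+h).choose (j+1) + (n-1) * (j+(h+1)).choose j := by
              rw [add_assoc, ← add_mul, hsum]
          _ ≤ n * ((j+1)+h).choose (j+1) + n * (j+(h+1)).choose j := by
              gcongr; omega
          _ = n * ((j+1) + (h+1)).choose (j+1) := by rw [hpas]; ring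


lemma pow_le_exp_factorial : ∀ k : ℕ, (k:ℝ)^k ≤ Real.exp k * k.factorial := by
  intro k
  induction k with
  | zero => simp
  | succ k ih =>
    rcases Nat.eq_zero_or_pos k with rfl | hk
    · simpa using Real.one_le_exp (zero_le_one)
    have hk0 : (0:ℝ) < k := by exact_mod_cast hk
    have h1 : (1 + 1/(k:ℝ)) ≤ Real.exp (1/(k:ℝ)) := by
      have := Real.add_one_le_exp (1/(k:ℝ)); linarith
    have h3 : (Real.exp (1/(k:ℝ)))^k = Real.exp 1 := by
      rw [← Real.exp_nat_mul]; congr 1; field_simp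
    have h2 : (1 + 1/(k:ℝ))^k ≤ Real.exp 1 := by
      rw [← h3]; exact pow_le_pow_left₀ (by positivity) h1 k
    have h4 : ((k:ℝ)+1)^k = (1 + 1/(k:ℝ))^k * (k:ℝ)^k := by
      rw [← mul_pow]; congr 1; field_simp
    have hb : ((k:ℝ)+1)^k ≤ Real.exp 1 * (k:ℝ)^k := by
      rw [h4]; exact mul_le_mul_of_nonneg_right h2 (by positivity)
    have hfact : ((k+1).factorial : ℝ) = ((k:ℝ)+1) * k.factorial := by
      rw [Nat.factorial_succ]; push_cast; ring
    have hexp : Real.exp ((k:ℕ)+1 : ℝ) = Real.exp 1 * Real.exp k := by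
      rw [← Real.exp_add]; ring_nf
    push_cast
    rw [hexp, hfact]
    have hfp : (0:ℝ) ≤ (k.factorial : ℝ) := by positivity
    have h5 : ((k:ℝ)+1)^(k+1) = ((k:ℝ)+1)^k * ((k:ℝ)+1) := pow_succ _ _
    have h6 : ((k:ℝ)+1)^k * ((k:ℝ)+1) ≤ Real.exp 1 * (k:ℝ)^k * ((k:ℝ)+1) :=
      mul_le_mul_of_nonneg_right hb (by linarith)
    have h7 : (k:ℝ)^k * ((k:ℝ)+1) ≤ Real.exp k * k.factorial * ((k:ℝ)+1) :=
      mul_le_mul_of_nonneg_right ih (by linarith)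
    nlinarith [Real.exp_pos (1:ℝ), Real.exp_pos ((k:ℕ):ℝ)]

lemma analytic (n h : ℕ) (hn : 2 ≤ n) (hh : 1 ≤ h) :
    ((n : ℝ) * ((Nat.log 2 n + (h-1)).choose (Nat.log 2 n) : ℕ))
      ≤ (n:ℝ) ^ ((2.45:ℝ) + Real.logb 2 (1 + ((h:ℝ)-1)/Real.logb 2 n)) := by
  set k := Nat.log 2 n with hk
  have hk1 : 1 ≤ k := Nat.log_pos (by norm_num) hn
  have hkR : (1:ℝ) ≤ (k:ℝ) := by exact_mod_cast hk1
  have hnR : (2:ℝ) ≤ (n:ℝ) := by exact_mod_cast hn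
  set L := Real.logb 2 n with hL
  have hL1 : (1:ℝ) ≤ L := by
    rw [hL, show (1:ℝ) = Real.logb 2 2 by simp]
    exact Real.logb_le_logb_of_le (by norm_num) (by norm_num) hnR
  have hkL : (k:ℝ) ≤ L := Real.natLog_le_logb n 2
  set x := ((h:ℝ) - 1) with hx
  have hx0 : (0:ℝ) ≤ x := by
    have : (1:ℝ) ≤ (h:ℝ) := by exact_mod_cast hh
    simp [hx]; linarith
  set B := 1 + x / L with hB
  have hB1 : (1:ℝ) ≤ B := by
    have : 0 ≤ x / L := div_nonneg hx0 (by linarith)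
    simp [hB]; linarith
  have hB0 : (0:ℝ) < B := by linarith
  -- cast of the binomial's top
  have hcast : (((k + (h-1)) : ℕ) : ℝ) = (k:ℝ) + x := by
    have : ((h-1 : ℕ):ℝ) = (h:ℝ) - 1 := by
      rw [Nat.cast_sub hh]; norm_num
    push_cast [this]; ring
  -- binomial bound
  have hchoose : (((k + (h-1)).choose k : ℕ) : ℝ) ≤ ((k:ℝ) + x)^k / k.factorial := by
    have := Nat.choose_le_pow_div (α := ℝ) k (k + (h-1))
    rwa [hcast] at this
  have hfac : ((k:ℝ))^k ≤ Real.exp k * k.factorial := pow_le_exp_factorial k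
  have hfacpos : (0:ℝ) < k.factorial := by exact_mod_cast k.factorial_pos
  have hkpos : (0:ℝ) < (k:ℝ) := by linarith
  have step1 : ((k:ℝ) + x)^k / k.factorial ≤ Real.exp k * (1 + x/(k:ℝ))^k := by
    have hsplit : ((k:ℝ) + x)^k = (k:ℝ)^k * (1 + x/(k:ℝ))^k := by
      rw [← mul_pow]; congr 1; field_simp
    rw [hsplit, div_le_iff₀ hfacpos]
    have h2 : (k:ℝ)^k * (1 + x/(k:ℝ))^k ≤ (Real.exp k * k.factorial) * (1 + x/(k:ℝ))^k :=
      mul_le_mul_of_nonneg_right hfac (by positivity)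
    calc (k:ℝ)^k * (1 + x/(k:ℝ))^k ≤ (Real.exp k * k.factorial) * (1 + x/(k:ℝ))^k := h2
      _ = Real.exp k * (1 + x/(k:ℝ))^k * k.factorial := by ring
  -- Bernoulli step
  have hLpos : (0:ℝ) < L := by linarith
  have bern : (1 + x/(k:ℝ)) ≤ B ^ (L / (k:ℝ)) := by
    have hp : (1:ℝ) ≤ L / (k:ℝ) := (one_le_div hkpos).mpr hkL
    have hs : (-1:ℝ) ≤ x / L := by
      have : (0:ℝ) ≤ x / L := by positivity
      linarith
    have := one_add_mul_self_le_rpow_one_add hs hp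
    have heq : 1 + (L / (k:ℝ)) * (x / L) = 1 + x/(k:ℝ) := by
      field_simp
    rw [heq] at this
    exact this
  have stepA : (1 + x/(k:ℝ))^k ≤ B ^ L := by
    have h1 : (1 + x/(k:ℝ))^k ≤ (B ^ (L / (k:ℝ)))^k :=
      pow_le_pow_left₀ (by positivity) bern k
    have h2 : (B ^ (L / (k:ℝ)))^k = B ^ L := by
      rw [← Real.rpow_natCast (B ^ (L / (k:ℝ))) k, ← Real.rpow_mul hB0.le]
      congr 1
      field_simp
    rw [h2] at h1
    exact h1
  have stepB : Real.exp k ≤ Real.exp L := Real.exp_le_exp.mpr hkL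
  -- combine
  have main : ((n : ℝ) * ((k + (h-1)).choose k : ℕ)) ≤ (n:ℝ) * (Real.exp L * B ^ L) := by
    have hBL0 : (0:ℝ) ≤ B ^ L := Real.rpow_nonneg hB0.le L
    have c1 : (((k + (h-1)).choose k : ℕ) : ℝ) ≤ Real.exp L * B ^ L := by
      calc (((k + (h-1)).choose k : ℕ) : ℝ) ≤ ((k:ℝ) + x)^k / k.factorial := hchoose
        _ ≤ Real.exp k * (1 + x/(k:ℝ))^k := step1
        _ ≤ Real.exp L * B ^ L := by
            apply mul_le_mul stepB stepA (by positivity) (Real.exp_pos L).le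
    exact mul_le_mul_of_nonneg_left c1 (by linarith)
  -- identify with rpow
  have hnpos : (0:ℝ) < (n:ℝ) := by linarith
  have h2L : (2:ℝ) ^ L = (n:ℝ) := Real.rpow_logb (by norm_num) (by norm_num) hnpos
  have hlogn : Real.log (n:ℝ) = L * Real.log 2 := by
    rw [← h2L, Real.log_rpow (by norm_num)]
  have idE : (n:ℝ) ^ (Real.logb 2 (Real.exp 1)) = Real.exp L := by
    rw [Real.rpow_def_of_pos hnpos, Real.logb, Real.log_exp, hlogn]
    congr 1
    have : Real.log 2 ≠ 0 := by
      have := Real.log_two_gt_d9; linarith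
    field_simp
  have idB : (n:ℝ) ^ (Real.logb 2 B) = B ^ L := by
    rw [Real.rpow_def_of_pos hnpos, Real.logb, hlogn,
      Real.rpow_def_of_pos hB0]
    congr 1
    have : Real.log 2 ≠ 0 := by
      have := Real.log_two_gt_d9; linarith
    field_simp
  have idfull : (n:ℝ) * (Real.exp L * B ^ L)
      = (n:ℝ) ^ ((1:ℝ) + Real.logb 2 (Real.exp 1) + Real.logb 2 B) := by
    rw [Real.rpow_add hnpos, Real.rpow_add hnpos, Real.rpow_one, idE, idB]
    ring
  have hexpo : (1:ℝ) + Real.logb 2 (Real.exp 1) ≤ 2.45 := by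
    rw [Real.logb, Real.log_exp]
    have h2 := Real.log_two_gt_d9
    have h3 : 1/Real.log 2 ≤ 1.45 := by
      rw [div_le_iff₀ (by linarith)]
      nlinarith
    linarith
  have final : (n:ℝ) ^ ((1:ℝ) + Real.logb 2 (Real.exp 1) + Real.logb 2 B)
      ≤ (n:ℝ) ^ ((2.45:ℝ) + Real.logb 2 B) := by
    apply Real.rpow_le_rpow_of_exponent_le (by linarith)
    linarith
  calc ((n : ℝ) * ((k + (h-1)).choose k : ℕ)) ≤ (n:ℝ) * (Real.exp L * B ^ L) := main
    _ = (n:ℝ) ^ ((1:ℝ) + Real.logb 2 (Real.exp 1) + Real.logb 2 B) := idfull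
    _ ≤ (n:ℝ) ^ ((2.45:ℝ) + Real.logb 2 B) := final

theorem stmt_4 (f : ℕ → ℕ → ℕ)
    (hf0 : ∀ h, f 0 h = 0)
    (hfn0 : ∀ n, 1 ≤ n → f n 0 = 1)
    (hrec : ∀ n h, 1 ≤ n → 1 ≤ h →
      f n h = f n (h - 1) + f (n / 2) h + f (n - 1 - n / 2) h) :
    ∀ n h : ℕ, 2 ≤ n → 1 ≤ h →
      (f n h : ℝ) ≤ (n : ℝ) ^ ((2.45 : ℝ) +
        Real.logb 2 (1 + ((h : ℝ) - 1) / Real.logb 2 n)) := by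
  intro n h hn hh
  obtain ⟨h', rfl⟩ : ∃ h', h = h' + 1 := ⟨h - 1, by omega⟩
  have hkey := key_bound f hf0 hfn0 hrec h' n
  have hcast : (f n (h'+1) : ℝ) ≤ ((n * (Nat.log 2 n + h').choose (Nat.log 2 n) : ℕ) : ℝ) :=
    Nat.cast_le.mpr hkey
  have hana := analytic n (h'+1) hn (by omega)
  have hsub : (h'+1) - 1 = h' := by omega
  rw [hsub] at hana
  calc (f n (h'+1) : ℝ) ≤ ((n * (Nat.log 2 n + h').choose (Nat.log 2 n) : ℕ) : ℝ) := hcast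
    _ = (n : ℝ) * ((Nat.log 2 n + h').choose (Nat.log 2 n) : ℕ) := by push_cast; ring
    _ ≤ (n:ℝ) ^ ((2.45:ℝ) + Real.logb 2 (1 + (((h'+1:ℕ):ℝ)-1)/Real.logb 2 n)) := hana
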